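/- Let D be a duplicate-free Shift-ECS, let v be a product node, and let w ∈ ⟦D⟧(v). Then there exist unique strings w1, w2 and unique bottom-or-product ('output') union-descendants v1 of ℓ(v) and v2 of r(v) such that w = w1 · w2, w1 is a shifted element of ⟦D⟧(v1), and w2 is a shifted element of ⟦D⟧(v2), where the shifts are the accumulated shift values along the unique union/shift paths from ℓ(v) to v1 and from r(v) to v2. -/

import Mathlib

/-- Shift a string over `Ω × ℤ` by `k`: add `k` to every position. -/
def sh {Ω : Type} (w : List (Ω × ℤ)) (k : ℤ) : List (Ω × ℤ) :=
  w.map (fun p => (p.1, p.2 + k))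

def shL {Ω : Type} (L : Set (List (Ω × ℤ))) (k : ℤ) : Set (List (Ω × ℤ)) :=
  (fun w => sh w k) '' L

def catL {Ω : Type} (L1 L2 : Set (List (Ω × ℤ))) : Set (List (Ω × ℤ)) :=
  Set.image2 (· ++ ·) L1 L2

/-- Labels of a Shift-ECS node: an output letter, a shift value, union, or product. -/
inductive Lab (Ω : Type) where
  | bot (o : Ω)
  | shift (k : ℤ)
  | union
  | prod

/-- A Shift-ECS: nodes with partial left/right children and a labeling. -/
structure ECS (Ω : Type) where
  V : Type
  l : V → Option V
  r : V → Option V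
  lab : V → Lab Ω

/-- The semantics `⟦D⟧(v)` of a Shift-ECS, as an inductively defined
membership relation: singletons at bottom nodes, union at `∪`-nodes,
concatenation at `⊙`-nodes, and shifting at shift nodes. -/
inductive ECS.Sem {Ω : Type} (D : ECS Ω) : D.V → List (Ω × ℤ) → Prop
  | bot {v o} : D.lab v = .bot o → D.Sem v [(o, 1)]
  | unionL {v u w} : D.lab v = .union → D.l v = some u → D.Sem u w → D.Sem v w
  | unionR {v u w} : D.lab v = .union → D.r v = some u → D.Sem u w → D.Sem v w
  | prod {v u1 u2 w1 w2} : D.lab v = .prod → D.l v = some u1 → D.r v = some u2 →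
      D.Sem u1 w1 → D.Sem u2 w2 → D.Sem v (w1 ++ w2)
  | shift {v u k w} : D.lab v = .shift k → D.l v = some u → D.Sem u w → D.Sem v (sh w k)

/-- `⟦D⟧(v)` as a set. -/
def ECS.semSet {Ω : Type} (D : ECS Ω) (v : D.V) : Set (List (Ω × ℤ)) :=
  {w | D.Sem v w}

/-- `D.UDesc u s v`: `v` is a union-descendant of `u` reachable by a path of
union and shift nodes, and `s` is the accumulated shift value along that path. -/
inductive ECS.UDesc {Ω : Type} (D : ECS Ω) : D.V → ℤ → D.V → Prop
  | refl {v} : D.UDesc v 0 v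
  | unionL {u s v u'} : D.lab u = .union → D.l u = some u' → D.UDesc u' s v →
      D.UDesc u s v
  | unionR {u s v u'} : D.lab u = .union → D.r u = some u' → D.UDesc u' s v →
      D.UDesc u s v
  | shift {u k u' s v} : D.lab u = .shift k → D.l u = some u' → D.UDesc u' s v →
      D.UDesc u (k + s) v

/-- An output node: a bottom node or a product node. -/
def ECS.IsOutput {Ω : Type} (D : ECS Ω) (v : D.V) : Prop :=
  D.lab v = .prod ∨ ∃ o, D.lab v = .bot o

/-- `D` is duplicate-free: children of union nodes have disjoint semantics,
and every string in the semantics of a product node decomposes uniquely. -/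
def ECS.DupFree {Ω : Type} (D : ECS Ω) : Prop :=
  (∀ v u1 u2, D.lab v = .union → D.l v = some u1 → D.r v = some u2 →
    ∀ w, ¬(D.Sem u1 w ∧ D.Sem u2 w)) ∧
  (∀ v u1 u2, D.lab v = .prod → D.l v = some u1 → D.r v = some u2 →
    ∀ w1 w2 w1' w2', D.Sem u1 w1 → D.Sem u2 w2 → D.Sem u1 w1' → D.Sem u2 w2' →
      w1 ++ w2 = w1' ++ w2' → w1 = w1' ∧ w2 = w2')

lemma sh_zero {Ω : Type} (w : List (Ω × ℤ)) : sh w 0 = w := by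
  simp [sh]

lemma sh_sh {Ω : Type} (w : List (Ω × ℤ)) (a b : ℤ) :
    sh (sh w a) b = sh w (a + b) := by
  simp [sh, add_assoc]

lemma sh_inj {Ω : Type} {a b : List (Ω × ℤ)} {k : ℤ} (h : sh a k = sh b k) :
    a = b := by
  have : sh (sh a k) (-k) = sh (sh b k) (-k) := by rw [h]
  simpa [sh_sh, sh_zero] using this

lemma ECS.sem_of_udesc {Ω : Type} {D : ECS Ω} {u : D.V} {s : ℤ} {v1 : D.V}
    (h : D.UDesc u s v1) : ∀ w, w ∈ shL (D.semSet v1) s → D.Sem u w := by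
  induction h with
  | refl =>
    intro w hw
    obtain ⟨x, hx, rfl⟩ := hw
    simpa [sh_zero, ECS.semSet] using hx
  | unionL hu hl _ ih =>
    intro w hw
    exact ECS.Sem.unionL hu hl (ih w hw)
  | unionR hu hr _ ih =>
    intro w hw
    exact ECS.Sem.unionR hu hr (ih w hw)
  | @shift u k u' s v1 hk hl _ ih =>
    intro w hw
    obtain ⟨x, hx, rfl⟩ := hw
    have : D.Sem u' (sh x s) := ih _ ⟨x, hx, rfl⟩
    have h2 := ECS.Sem.shift hk hl this
    rwa [sh_sh, add_comm s k] at h2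

lemma ECS.exists_output_udesc {Ω : Type} {D : ECS Ω} {u : D.V}
    {w : List (Ω × ℤ)} (h : D.Sem u w) :
    ∃ v1 s, D.UDesc u s v1 ∧ D.IsOutput v1 ∧ w ∈ shL (D.semSet v1) s := by
  induction h with
  | @bot v o hb =>
    exact ⟨v, 0, .refl, .inr ⟨o, hb⟩, [(o, 1)], ECS.Sem.bot hb, sh_zero _⟩
  | @unionL v u w hu hl _ ih =>
    obtain ⟨v1, s, hd, ho, hm⟩ := ih
    exact ⟨v1, s, .unionL hu hl hd, ho, hm⟩
  | @unionR v u w hu hr _ ih =>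
    obtain ⟨v1, s, hd, ho, hm⟩ := ih
    exact ⟨v1, s, .unionR hu hr hd, ho, hm⟩
  | @prod v u1 u2 w1 w2 hp hl hr h1 h2 =>
    exact ⟨v, 0, .refl, .inl hp, w1 ++ w2, ECS.Sem.prod hp hl hr h1 h2, sh_zero _⟩
  | @shift v u k w hk hl _ ih =>
    obtain ⟨v1, s, hd, ho, x, hx, rfl⟩ := ih
    exact ⟨v1, k + s, .shift hk hl hd, ho, x, hx, by rw [sh_sh, add_comm s k]⟩

lemma ECS.udesc_uniq {Ω : Type} {D : ECS Ω} (hdf : D.DupFree) :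
    ∀ {u s v1}, D.UDesc u s v1 → D.IsOutput v1 →
    ∀ {s' v1'}, D.UDesc u s' v1' → D.IsOutput v1' →
    ∀ w, w ∈ shL (D.semSet v1) s → w ∈ shL (D.semSet v1') s' →
    v1 = v1' ∧ s = s' := by
  intro u s v1 h
  induction h with
  | @refl u =>
    intro hout s' v1' h' hout' w hw hw'
    cases h' with
    | refl => exact ⟨rfl, rfl⟩
    | unionL hu _ _ => rcases hout with h1 | ⟨o, h1⟩ <;> rw [h1] at hu <;> cases hu
    | unionR hu _ _ => rcases hout with h1 | ⟨o, h1⟩ <;> rw [h1] at hu <;> cases hu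
    | shift hk _ _ => rcases hout with h1 | ⟨o, h1⟩ <;> rw [h1] at hk <;> cases hk
  | @unionL u s v1 u' hu hl hd ih =>
    intro hout s' v1' h' hout' w hw hw'
    cases h' with
    | refl => rcases hout' with h1 | ⟨o, h1⟩ <;> rw [h1] at hu <;> cases hu
    | @unionL _ _ _ u'' hu2 hl2 hd2 =>
      rw [hl] at hl2
      injection hl2 with h2; subst h2
      exact ih hout hd2 hout' w hw hw'
    | @unionR _ _ _ u'' hu2 hr2 hd2 =>
      exact absurd ⟨ECS.sem_of_udesc hd w hw, ECS.sem_of_udesc hd2 w hw'⟩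
        (hdf.1 u u' u'' hu hl hr2 w)
    | shift hk _ _ => rw [hu] at hk; cases hk
  | @unionR u s v1 u' hu hr hd ih =>
    intro hout s' v1' h' hout' w hw hw'
    cases h' with
    | refl => rcases hout' with h1 | ⟨o, h1⟩ <;> rw [h1] at hu <;> cases hu
    | @unionL _ _ _ u'' hu2 hl2 hd2 =>
      exact absurd ⟨ECS.sem_of_udesc hd2 w hw', ECS.sem_of_udesc hd w hw⟩
        (hdf.1 u u'' u' hu hl2 hr w)
    | @unionR _ _ _ u'' hu2 hr2 hd2 =>
      rw [hr] at hr2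
      injection hr2 with h2; subst h2
      exact ih hout hd2 hout' w hw hw'
    | shift hk _ _ => rw [hu] at hk; cases hk
  | @shift u k u' s v1 hk hl hd ih =>
    intro hout s' v1' h' hout' w hw hw'
    cases h' with
    | refl => rcases hout' with h1 | ⟨o, h1⟩ <;> rw [h1] at hk <;> cases hk
    | unionL hu _ _ => rw [hk] at hu; cases hu
    | unionR hu _ _ => rw [hk] at hu; cases hu
    | @shift _ k2 u'' s2 _ hk2 hl2 hd2 =>
      rw [hk] at hk2
      injection hk2 with h2; subst h2
      rw [hl] at hl2
      injection hl2 with h3; subst h3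
      obtain ⟨x, hx, hxe⟩ := hw
      obtain ⟨x', hx', hxe'⟩ := hw'
      have e1 : sh (sh x s) k = w := by rw [sh_sh, add_comm s k]; exact hxe
      have e2 : sh (sh x' s2) k = w := by rw [sh_sh, add_comm s2 k]; exact hxe'
      have e3 : sh x s = sh x' s2 := sh_inj (e1.trans e2.symm)
      obtain ⟨he1, he2⟩ := ih hout hd2 hout' (sh x s) ⟨x, hx, rfl⟩
        ⟨x', hx', e3.symm⟩
      exact ⟨he1, by rw [he2]⟩

/-- In a duplicate-free Shift-ECS, every string in the semantics of a product
node `v` decomposes uniquely as `w1 · w2` with unique output union-descendants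
`v1` of `ℓ(v)` and `v2` of `r(v)` and accumulated shifts `s1`, `s2` such that
`w1 ∈ sh(⟦D⟧(v1), s1)` and `w2 ∈ sh(⟦D⟧(v2), s2)`. -/
theorem dupfree_unique_output_decomposition {Ω : Type} (D : ECS Ω)
    (hdf : D.DupFree) (v u1 u2 : D.V)
    (hv : D.lab v = .prod) (hl : D.l v = some u1) (hr : D.r v = some u2)
    (w : List (Ω × ℤ)) (hw : D.Sem v w) :
    ∃! t : (List (Ω × ℤ) × List (Ω × ℤ)) × (D.V × ℤ) × (D.V × ℤ),
      w = t.1.1 ++ t.1.2 ∧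
      D.UDesc u1 t.2.1.2 t.2.1.1 ∧ D.IsOutput t.2.1.1 ∧
      t.1.1 ∈ shL (D.semSet t.2.1.1) t.2.1.2 ∧
      D.UDesc u2 t.2.2.2 t.2.2.1 ∧ D.IsOutput t.2.2.1 ∧
      t.1.2 ∈ shL (D.semSet t.2.2.1) t.2.2.2 := by
  obtain ⟨w1, w2, hs1, hs2, rfl⟩ :
      ∃ w1 w2, D.Sem u1 w1 ∧ D.Sem u2 w2 ∧ w = w1 ++ w2 := by
    cases hw with
    | bot hb => rw [hv] at hb; cases hb
    | unionL hu _ _ => rw [hv] at hu; cases hu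
    | unionR hu _ _ => rw [hv] at hu; cases hu
    | shift hk _ _ => rw [hv] at hk; cases hk
    | @prod _ a b w1 w2 hp hl' hr' h1 h2 =>
      rw [hl] at hl'; injection hl' with e1; subst e1
      rw [hr] at hr'; injection hr' with e2; subst e2
      exact ⟨w1, w2, h1, h2, rfl⟩
  obtain ⟨v1, s1, hd1, ho1, hm1⟩ := ECS.exists_output_udesc hs1
  obtain ⟨v2, s2, hd2, ho2, hm2⟩ := ECS.exists_output_udesc hs2
  refine ⟨((w1, w2), (v1, s1), (v2, s2)),
    ⟨rfl, hd1, ho1, hm1, hd2, ho2, hm2⟩, ?_⟩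
  rintro ⟨⟨w1', w2'⟩, ⟨v1', s1'⟩, ⟨v2', s2'⟩⟩
    ⟨heq, hd1', ho1', hm1', hd2', ho2', hm2'⟩
  have hs1' : D.Sem u1 w1' := ECS.sem_of_udesc hd1' w1' hm1'
  have hs2' : D.Sem u2 w2' := ECS.sem_of_udesc hd2' w2' hm2'
  obtain ⟨e1, e2⟩ := hdf.2 v u1 u2 hv hl hr w1' w2' w1 w2 hs1' hs2' hs1 hs2
    heq.symm
  subst e1; subst e2
  obtain ⟨f1, f2⟩ := ECS.udesc_uniq hdf hd1' ho1' hd1 ho1 w1' hm1' hm1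
  obtain ⟨g1, g2⟩ := ECS.udesc_uniq hdf hd2' ho2' hd2 ho2 w2' hm2' hm2
  subst f1; subst f2; subst g1; subst g2
  rfl
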